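/- arXiv:0808.1320 — 2 statements merged into one kernel-verified Lean document; each statement's English description precedes it below -/
import Mathlib

section
/- Any multiset {X_1,...,X_n} of nonnegative integers can be converted into a balanced multiset {Y_1,...,Y_n} with the same total sum by finitely many moves, each of which replaces a pair {X_i, X_j} with {⌊(X_i+X_j)/2⌋, ⌈(X_i+X_j)/2⌉}. -/
/-- A multiset of nonnegative integers is *balanced* if any two of its
elements differ by at most 1. -/
def MultisetBalanced (S : Multiset ℕ) : Prop :=
  ∀ a ∈ S, ∀ b ∈ S, a ≤ b + 1

/-- One balancing move: replace two elements `a`, `b` by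
`⌊(a+b)/2⌋` and `⌈(a+b)/2⌉`. -/
def BalMove (S T : Multiset ℕ) : Prop :=
  ∃ a b S', S = a ::ₘ b ::ₘ S' ∧ T = ((a + b) / 2) ::ₘ ((a + b + 1) / 2) ::ₘ S'

lemma bal_key (a b : ℕ) (h : b + 2 ≤ a) :
    ((a+b)/2)*((a+b)/2) + ((a+b+1)/2)*((a+b+1)/2) < a*a + b*b := by
  obtain ⟨t, rfl⟩ : ∃ t, a = b + 2 + t := ⟨a - (b+2), by omega⟩
  rcases Nat.even_or_odd t with ⟨u, rfl⟩ | ⟨u, rfl⟩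
  · have h1 : (b+2+(u+u)+b)/2 = b+1+u := by omega
    have h2 : (b+2+(u+u)+b+1)/2 = b+1+u := by omega
    rw [h1, h2]; nlinarith
  · have h1 : (b+2+(2*u+1)+b)/2 = b+1+u := by omega
    have h2 : (b+2+(2*u+1)+b+1)/2 = b+2+u := by omega
    rw [h1, h2]; nlinarith

/-- Any multiset of nonnegative integers can be converted into a balanced
multiset of the same cardinality and sum by finitely many balancing moves. -/
theorem exists_balanced_of_moves (S : Multiset ℕ) :
    ∃ T : Multiset ℕ, Relation.ReflTransGen BalMove S T ∧
      Multiset.card T = Multiset.card S ∧ T.sum = S.sum ∧ MultisetBalanced T := by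
  suffices h : ∀ n (S : Multiset ℕ), (S.map fun x => x*x).sum < n →
      ∃ T : Multiset ℕ, Relation.ReflTransGen BalMove S T ∧
        Multiset.card T = Multiset.card S ∧ T.sum = S.sum ∧ MultisetBalanced T by
    exact h _ S (Nat.lt_succ_self _)
  intro n
  induction n using Nat.strong_induction_on with
  | _ n ih =>
    intro S hS
    by_cases hbal : MultisetBalanced S
    · exact ⟨S, .refl, rfl, rfl, hbal⟩
    · simp only [MultisetBalanced, not_forall] at hbal
      obtain ⟨a, ha, b, hb, hab⟩ := hbal
      have hab : b + 2 ≤ a := by omega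
      have hne : b ≠ a := by omega
      have hbe : b ∈ S.erase a := (Multiset.mem_erase_of_ne hne).2 hb
      set S' := (S.erase a).erase b with hS'
      have hScons : S = a ::ₘ b ::ₘ S' := by
        rw [hS', Multiset.cons_erase hbe, Multiset.cons_erase ha]
      set T₀ := ((a+b)/2) ::ₘ ((a+b+1)/2) ::ₘ S' with hT₀
      have hmove : BalMove S T₀ := ⟨a, b, S', hScons, rfl⟩
      have hφ : (T₀.map fun x => x*x).sum < (S.map fun x => x*x).sum := by
        have := bal_key a b hab
        rw [hScons]
        simp only [hT₀, Multiset.map_cons, Multiset.sum_cons]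
        omega
      obtain ⟨T, hT, hcard, hsum, hbalT⟩ := ih _ hS T₀ hφ
      refine ⟨T, .head hmove hT, ?_, ?_, hbalT⟩
      · rw [hScons, hcard]; simp [hT₀]
      · rw [hScons, hsum]; simp only [hT₀, Multiset.sum_cons]; omega
end

section
/- If a multiset S of nonnegative integers is not balanced (its maximum and minimum differ by at least 2), then replacing a pair consisting of a maximum element and a minimum element by their floored and ceiled averages strictly decreases the difference between the maximum and minimum, or keeps it the same while the process terminates in finitely many steps; in particular, the difference max(S) - min(S) can be reduced to at most 1 by finitely many such moves. -/
/-- The sum of squares of the elements, a measure that strictly decreases. -/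
def muBal (S : Multiset ℕ) : ℕ := (S.map (fun x => x * x)).sum

lemma moves_reduce_spread_aux : ∀ n (S : Multiset ℕ), muBal S < n → S ≠ 0 →
    ∃ T : Multiset ℕ, Relation.ReflTransGen BalMove S T ∧
      ∃ m : ℕ, ∀ a ∈ T, m ≤ a ∧ a ≤ m + 1 := by
  intro n
  induction n with
  | zero => intro S h; omega
  | succ n ih =>
    intro S hlt hS0
    have hne : S.toFinset.Nonempty := by
      rw [Multiset.toFinset_nonempty]; exact hS0
    set m := S.toFinset.min' hne with hm
    have hmS : m ∈ S := by
      have := S.toFinset.min'_mem hne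
      rwa [Multiset.mem_toFinset] at this
    have hmin : ∀ a ∈ S, m ≤ a := by
      intro a ha
      exact S.toFinset.min'_le a (Multiset.mem_toFinset.mpr ha)
    by_cases hbal : ∀ a ∈ S, a ≤ m + 1
    · exact ⟨S, Relation.ReflTransGen.refl, m, fun a ha => ⟨hmin a ha, hbal a ha⟩⟩
    · push_neg at hbal
      obtain ⟨b, hbS, hb⟩ := hbal
      have hbm : m + 2 ≤ b := by omega
      have hbS' : b ∈ S.erase m := by
        rw [Multiset.mem_erase_of_ne (by omega)]; exact hbS
      set S' := (S.erase m).erase b with hS'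
      have hSeq : S = m ::ₘ b ::ₘ S' := by
        rw [hS', Multiset.cons_erase hbS', Multiset.cons_erase hmS]
      set c := (m + b) / 2 with hc
      set d := (m + b + 1) / 2 with hd
      set T := c ::ₘ d ::ₘ S' with hT
      have hmove : BalMove S T := ⟨m, b, S', hSeq, rfl⟩
      have hcd : c + d = m + b := by omega
      have hac : m < c := by omega
      have hdb : d < b := by omega
      have hcle : c ≤ d := by omega
      have hsq : c * c + d * d < m * m + b * b := by nlinarith
      have hmu : muBal T < muBal S := by
        rw [hSeq, hT]
        simp only [muBal, Multiset.map_cons, Multiset.sum_cons]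
        omega
      obtain ⟨T', hTT', m', hm'⟩ := ih T (by omega) (by simp [hT])
      exact ⟨T', Relation.ReflTransGen.head hmove hTT', m', hm'⟩

/-- For a finite nonempty multiset `S` of nonnegative integers, finitely many
balancing moves reduce the difference between maximum and minimum to at most
`1`: there is a multiset `T` reachable from `S` by moves all of whose elements
lie in some interval `[m, m+1]`. -/
theorem moves_reduce_spread (S : Multiset ℕ) (hS : S ≠ 0) :
    ∃ T : Multiset ℕ, Relation.ReflTransGen BalMove S T ∧
      ∃ m : ℕ, ∀ a ∈ T, m ≤ a ∧ a ≤ m + 1 := by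
  exact moves_reduce_spread_aux (muBal S + 1) S (by omega) hS
end
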